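/- arXiv:2204.09173 — 4 statements merged into one kernel-verified Lean document; each statement's English description precedes it below -/
import Mathlib

section
/- Define L_{ρ,m} = ρ^{m+1}(m+1)^7/(m!)² for ρ > 0 and integer m ≥ 0. There exists a constant C > 0 (independent of ρ, m, k) such that for all integers m ≥ 0 and 0 ≤ k ≤ ⌊m/2⌋: (m!/(k!(m-k)!)) · L_{ρ,m}/(L_{ρ,k+2} · L_{ρ,m-k+1}) ≤ (C/ρ²) · (1/(k+1)) · ((m+1)^{1/2}/ρ^{1/2}) · ((m-k+2)^{3/2}/ρ^{3/2}). -/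
set_option linter.unusedVariables false

/-- Abstract form of the weight-ratio identity, with the seventh powers `P, Q, R`
and factorials treated as atoms to keep `ring` cheap. -/
lemma Lw_ratio_aux (ρ fk fn fm c1 c2 d1 P Q R : ℝ) (k n : ℕ)
    (hρ : ρ ≠ 0) (hfk : fk ≠ 0) (hfn : fn ≠ 0) (hfm : fm ≠ 0)
    (hc1 : c1 ≠ 0) (hc2 : c2 ≠ 0) (hd1 : d1 ≠ 0) (hQ : Q ≠ 0) (hR : R ≠ 0) :
    fm / (fk * fn) *
      ((ρ ^ (k + n + 1) * P / fm ^ 2) /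
        ((ρ ^ (k + 2 + 1) * Q / (c2 * c1 * fk) ^ 2) * (ρ ^ (n + 1 + 1) * R / (d1 * fn) ^ 2))) =
      P * ((c1 ^ 2 * c2 ^ 2 * d1 ^ 2) * (fk * fn)) / (ρ ^ 4 * ((Q * R) * fm)) := by
  field_simp
  ring



/-- The Gevrey-2 weight `L_{ρ,m} = ρ^{m+1}(m+1)^7/(m!)²`. -/
noncomputable def Lw (ρ : ℝ) (m : ℕ) : ℝ :=
  ρ ^ (m + 1) * ((m : ℝ) + 1) ^ 7 / ((Nat.factorial m : ℝ)) ^ 2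

/-- Low-frequency combinatorial weight inequality for the Gevrey-2 weights: there is an
absolute constant `C > 0` such that for `0 < ρ ≤ 1`, `m ≥ 0` and `0 ≤ k ≤ ⌊m/2⌋`,
`(m!/(k!(m-k)!)) L_{ρ,m}/(L_{ρ,k+2} L_{ρ,m-k+1})
  ≤ (C/ρ²)(1/(k+1))((m+1)^{1/2}/ρ^{1/2})((m-k+2)^{3/2}/ρ^{3/2})`. -/
theorem weight_ineq_low : ∃ C : ℝ, 0 < C ∧
    ∀ ρ : ℝ, 0 < ρ → ρ ≤ 1 → ∀ m k : ℕ, k ≤ m / 2 →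
      (Nat.factorial m : ℝ) / ((Nat.factorial k : ℝ) * (Nat.factorial (m - k) : ℝ)) *
          (Lw ρ m / (Lw ρ (k + 2) * Lw ρ (m - k + 1))) ≤
        C / ρ ^ 2 * (1 / ((k : ℝ) + 1)) * (((m : ℝ) + 1) ^ ((1 : ℝ) / 2) / ρ ^ ((1 : ℝ) / 2)) *
          (((m - k : ℕ) + 2 : ℝ) ^ ((3 : ℝ) / 2) / ρ ^ ((3 : ℝ) / 2)) := by
  refine ⟨128, by norm_num, ?_⟩
  intro ρ hρ hρ1 m k hk
  have hkm : k ≤ m := hk.trans (Nat.div_le_self m 2)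
  obtain ⟨n, rfl⟩ : ∃ n, m = k + n := ⟨m - k, by omega⟩
  have hnk : k + n - k = n := by omega
  rw [hnk]
  have hkn : k ≤ n := by omega
  have hρ' : ρ ≠ 0 := ne_of_gt hρ
  have hfk : ((k.factorial : ℝ)) ≠ 0 := by positivity
  have hfn : ((n.factorial : ℝ)) ≠ 0 := by positivity
  have hfm : (((k+n).factorial : ℝ)) ≠ 0 := by positivity
  have hK0 : (0:ℝ) ≤ (k:ℝ) := Nat.cast_nonneg k
  have hN0 : (0:ℝ) ≤ (n:ℝ) := Nat.cast_nonneg n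
  have hKN : ((k:ℝ)) ≤ (n:ℝ) := Nat.cast_le.mpr hkn
  -- exact value of the left-hand side
  have hL : (((k+n).factorial : ℝ)) / ((Nat.factorial k : ℝ) * (Nat.factorial n : ℝ)) *
        (Lw ρ (k+n) / (Lw ρ (k + 2) * Lw ρ (n + 1)))
      = (((k:ℝ)+(n:ℝ)+1)^7 * ((((k:ℝ)+1)^2 * ((k:ℝ)+2)^2 * ((n:ℝ)+1)^2) *
            ((k.factorial:ℝ) * (n.factorial:ℝ))))
        / (ρ^4 * ((((k:ℝ)+3)^7 * ((n:ℝ)+2)^7) * (((k+n).factorial:ℝ)))) := by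
    have h1 : (((k+2).factorial : ℝ)) = (((k:ℝ)+2)*((k:ℝ)+1)*(k.factorial:ℝ)) := by
      rw [show k+2 = (k+1)+1 from rfl, Nat.factorial_succ, Nat.factorial_succ]; push_cast; ring
    have h2 : (((n+1).factorial : ℝ)) = (((n:ℝ)+1)*(n.factorial:ℝ)) := by
      rw [Nat.factorial_succ]; push_cast; ring
    simp only [Lw]
    rw [h1, h2]
    have hc1 : ((k:ℝ)+1) ≠ 0 := by positivity
    have hc2 : ((k:ℝ)+2) ≠ 0 := by positivity
    have hd1 : ((n:ℝ)+1) ≠ 0 := by positivity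
    have hQ : ((((k+2:ℕ):ℝ))+1)^7 ≠ 0 := by positivity
    have hR : ((((n+1:ℕ):ℝ))+1)^7 ≠ 0 := by positivity
    rw [Lw_ratio_aux ρ _ _ _ ((k:ℝ)+1) ((k:ℝ)+2) ((n:ℝ)+1) _ _ _ k n
        hρ' hfk hfn hfm hc1 hc2 hd1 hQ hR]
    push_cast
    ring
  push_cast
  rw [hL]
  have ha0 : (0:ℝ) < (k:ℝ)+(n:ℝ)+1 := by positivity
  have hb0 : (0:ℝ) < (n:ℝ)+2 := by positivity
  have hab : (k:ℝ)+(n:ℝ)+1 ≤ 2 * ((n:ℝ)+2) := by linarith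
  -- rewrite the right-hand side over a common denominator
  have hρ4 : ρ ^ ((1:ℝ)/2) * ρ ^ ((3:ℝ)/2) = ρ ^ 2 := by
    rw [← Real.rpow_add hρ, show (1:ℝ)/2 + 3/2 = ((2:ℕ):ℝ) by norm_num, Real.rpow_natCast]
  have h12 : (0:ℝ) < ρ ^ ((1:ℝ)/2) := Real.rpow_pos_of_pos hρ _
  have h32 : (0:ℝ) < ρ ^ ((3:ℝ)/2) := Real.rpow_pos_of_pos hρ _
  have hR : (128:ℝ) / ρ ^ 2 * (1 / ((k:ℝ) + 1)) *
        (((k:ℝ)+(n:ℝ)+1) ^ ((1:ℝ)/2) / ρ ^ ((1:ℝ)/2)) *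
        (((n:ℝ)+2) ^ ((3:ℝ)/2) / ρ ^ ((3:ℝ)/2))
      = (128 * ((k:ℝ)+(n:ℝ)+1) ^ ((1:ℝ)/2) * ((n:ℝ)+2) ^ ((3:ℝ)/2)) / (ρ^4 * ((k:ℝ) + 1)) := by
    rw [div_mul_div_comm, div_mul_div_comm, div_mul_div_comm,
        show ρ ^ 2 * ((k:ℝ)+1) * ρ ^ ((1:ℝ)/2) * ρ ^ ((3:ℝ)/2)
          = ((k:ℝ)+1) * (ρ^2 * (ρ ^ ((1:ℝ)/2) * ρ ^ ((3:ℝ)/2))) from by ring, hρ4,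
        show (128:ℝ) * 1 * ((k:ℝ)+(n:ℝ)+1) ^ ((1:ℝ)/2) * ((n:ℝ)+2) ^ ((3:ℝ)/2)
          = 128 * ((k:ℝ)+(n:ℝ)+1) ^ ((1:ℝ)/2) * ((n:ℝ)+2) ^ ((3:ℝ)/2) from by ring,
        show ((k:ℝ)+1) * (ρ^2 * ρ^2) = ρ^4 * ((k:ℝ)+1) from by ring]
  rw [hR]
  -- key rpow inequality
  have key : ((k:ℝ)+(n:ℝ)+1) ^ 7
      ≤ 128 * ((k:ℝ)+(n:ℝ)+1) ^ ((1:ℝ)/2) * ((n:ℝ)+2) ^ ((3:ℝ)/2) * ((n:ℝ)+2) ^ 5 := by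
    have ha7 : ((k:ℝ)+(n:ℝ)+1) ^ 7
        = ((k:ℝ)+(n:ℝ)+1) ^ ((1:ℝ)/2) * ((k:ℝ)+(n:ℝ)+1) ^ ((13:ℝ)/2) := by
      rw [← Real.rpow_natCast ((k:ℝ)+(n:ℝ)+1) 7, ← Real.rpow_add ha0]; norm_num
    have h13 : ((k:ℝ)+(n:ℝ)+1) ^ ((13:ℝ)/2) ≤ (2 * ((n:ℝ)+2)) ^ ((13:ℝ)/2) :=
      Real.rpow_le_rpow ha0.le hab (by norm_num)
    have hsplit : (2 * ((n:ℝ)+2)) ^ ((13:ℝ)/2)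
        = 2 ^ ((13:ℝ)/2) * (((n:ℝ)+2) ^ ((3:ℝ)/2) * ((n:ℝ)+2) ^ 5) := by
      rw [Real.mul_rpow (by norm_num) hb0.le]
      congr 1
      rw [← Real.rpow_natCast ((n:ℝ)+2) 5, ← Real.rpow_add hb0]; norm_num
    have h2c : (2:ℝ) ^ ((13:ℝ)/2) ≤ 128 := by
      calc (2:ℝ) ^ ((13:ℝ)/2) ≤ 2 ^ ((7:ℕ):ℝ) :=
            Real.rpow_le_rpow_of_exponent_le one_le_two (by norm_num)
        _ = 128 := by rw [Real.rpow_natCast]; norm_num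
    calc ((k:ℝ)+(n:ℝ)+1) ^ 7
        = ((k:ℝ)+(n:ℝ)+1) ^ ((1:ℝ)/2) * ((k:ℝ)+(n:ℝ)+1) ^ ((13:ℝ)/2) := ha7
      _ ≤ ((k:ℝ)+(n:ℝ)+1) ^ ((1:ℝ)/2) * (2 * ((n:ℝ)+2)) ^ ((13:ℝ)/2) :=
          mul_le_mul_of_nonneg_left h13 (Real.rpow_nonneg ha0.le _)
      _ = ((k:ℝ)+(n:ℝ)+1) ^ ((1:ℝ)/2) * (2 ^ ((13:ℝ)/2) * (((n:ℝ)+2) ^ ((3:ℝ)/2) * ((n:ℝ)+2) ^ 5)) := by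
          rw [hsplit]
      _ ≤ ((k:ℝ)+(n:ℝ)+1) ^ ((1:ℝ)/2) * (128 * (((n:ℝ)+2) ^ ((3:ℝ)/2) * ((n:ℝ)+2) ^ 5)) := by
          refine mul_le_mul_of_nonneg_left
            (mul_le_mul_of_nonneg_right h2c (by positivity)) (Real.rpow_nonneg ha0.le _)
      _ = 128 * ((k:ℝ)+(n:ℝ)+1) ^ ((1:ℝ)/2) * ((n:ℝ)+2) ^ ((3:ℝ)/2) * ((n:ℝ)+2) ^ 5 := by ring
  have hfac : (k.factorial:ℝ) * (n.factorial:ℝ) ≤ ((k+n).factorial : ℝ) := by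
    exact_mod_cast Nat.le_of_dvd (Nat.factorial_pos _)
      (Nat.factorial_mul_factorial_dvd_factorial_add k n)
  have hfmpos : (0:ℝ) < ((k+n).factorial : ℝ) := by positivity
  calc (((k:ℝ)+(n:ℝ)+1)^7 * ((((k:ℝ)+1)^2 * ((k:ℝ)+2)^2 * ((n:ℝ)+1)^2) *
            ((k.factorial:ℝ) * (n.factorial:ℝ))))
        / (ρ^4 * ((((k:ℝ)+3)^7 * ((n:ℝ)+2)^7) * (((k+n).factorial:ℝ))))
      ≤ (((k:ℝ)+(n:ℝ)+1)^7 * ((((k:ℝ)+3)^2 * ((k:ℝ)+3)^2 * ((n:ℝ)+2)^2) *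
            (((k+n).factorial:ℝ))))
        / (ρ^4 * ((((k:ℝ)+3)^7 * ((n:ℝ)+2)^7) * (((k+n).factorial:ℝ)))) := by
        gcongr <;> first | exact hfac | linarith
    _ = ((k:ℝ)+(n:ℝ)+1)^7 / (ρ^4 * (((k:ℝ)+1) * ((n:ℝ)+2)^5)) *
          ((((k:ℝ)+1) * ((n:ℝ)+2)^5) / (((k:ℝ)+3)^3 * ((n:ℝ)+2)^5)) := by
        rw [div_mul_div_comm, div_eq_div_iff (by positivity) (by positivity)]
        ring
    _ ≤ ((k:ℝ)+(n:ℝ)+1)^7 / (ρ^4 * (((k:ℝ)+1) * ((n:ℝ)+2)^5)) * 1 := by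
        refine mul_le_mul_of_nonneg_left ?_ (by positivity)
        rw [div_le_one (by positivity)]
        have h3 : ((k:ℝ)+1) ≤ ((k:ℝ)+3)^3 := by
          calc ((k:ℝ)+1) ≤ ((k:ℝ)+3) := by linarith
            _ ≤ ((k:ℝ)+3)^3 := le_self_pow₀ (by linarith) (by norm_num)
        have h5 : (0:ℝ) ≤ ((n:ℝ)+2)^5 := by positivity
        exact mul_le_mul_of_nonneg_right h3 h5
    _ = ((k:ℝ)+(n:ℝ)+1)^7 / (ρ^4 * (((k:ℝ)+1) * ((n:ℝ)+2)^5)) := mul_one _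
    _ ≤ (128 * ((k:ℝ)+(n:ℝ)+1) ^ ((1:ℝ)/2) * ((n:ℝ)+2) ^ ((3:ℝ)/2)) / (ρ^4 * ((k:ℝ) + 1)) := by
        rw [div_le_div_iff₀ (by positivity) (by positivity)]
        calc ((k:ℝ)+(n:ℝ)+1)^7 * (ρ^4 * (((k:ℝ)+1)))
            ≤ (128 * ((k:ℝ)+(n:ℝ)+1) ^ ((1:ℝ)/2) * ((n:ℝ)+2) ^ ((3:ℝ)/2) * ((n:ℝ)+2)^5) *
                (ρ^4 * (((k:ℝ)+1))) := mul_le_mul_of_nonneg_right key (by positivity)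
          _ = 128 * ((k:ℝ)+(n:ℝ)+1) ^ ((1:ℝ)/2) * ((n:ℝ)+2) ^ ((3:ℝ)/2) *
                (ρ^4 * (((k:ℝ)+1) * ((n:ℝ)+2)^5)) := by ring
end

section
/- Define L_{ρ,m} = ρ^{m+1}(m+1)^7/(m!)². There exists a constant C > 0 such that for all integers m ≥ 0 and all k with ⌊m/2⌋ + 1 ≤ k ≤ m: (m!/(k!(m-k)!)) · L_{ρ,m}/(L_{ρ,k} · L_{ρ,m-k+3}) ≤ (C/ρ⁴) · 1/(m-k+1). -/
lemma fact_add_le (k j : ℕ) : k.factorial * (k+1)^j ≤ (k+j).factorial := by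
  induction j with
  | zero => simp
  | succ n ih =>
    calc k.factorial * (k+1)^(n+1) = (k.factorial * (k+1)^n) * (k+1) := by ring
      _ ≤ (k+n).factorial * (k+n+1) := Nat.mul_le_mul ih (by omega)
      _ = (k+n+1).factorial := by rw [Nat.factorial_succ]; ring

lemma key_cancelled (k j : ℕ) (hjk : j ≤ k) :
    k.factorial * ((j+3).factorial)^2 * (k+j+1)^7 * (j+1)
      ≤ 128 * j.factorial * (k+j).factorial * (k+1)^7 * (j+4)^7 := by
  have hc : ((j+3).factorial) = ((j+1)*(j+2)*(j+3)) * j.factorial := by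
    simp [Nat.factorial_succ]; ring
  have hB : j.factorial ≤ (k+1)^j :=
    le_trans (Nat.factorial_le_pow j) (Nat.pow_le_pow_left (by omega) j)
  have hD : ((j+1)*(j+2)*(j+3))^2 * (j+1) ≤ (j+4)^7 := by
    calc ((j+1)*(j+2)*(j+3))^2 * (j+1) ≤ ((j+4)*(j+4)*(j+4))^2 * (j+4) := by gcongr <;> omega
      _ = (j+4)^7 := by ring
  have hE : (k+j+1)^7 ≤ 128 * (k+1)^7 := by
    calc (k+j+1)^7 ≤ (2*(k+1))^7 := Nat.pow_le_pow_left (by omega) 7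
      _ = 128*(k+1)^7 := by ring
  calc k.factorial * ((j+3).factorial)^2 * (k+j+1)^7 * (j+1)
      = k.factorial * ((j.factorial * j.factorial) * ((((j+1)*(j+2)*(j+3))^2 * (j+1)) * (k+j+1)^7)) := by
        rw [hc]; ring
    _ ≤ k.factorial * (((k+1)^j * j.factorial) * (((j+4)^7) * (128*(k+1)^7))) := by
        refine Nat.mul_le_mul le_rfl (Nat.mul_le_mul (Nat.mul_le_mul hB le_rfl)
          (Nat.mul_le_mul hD hE))
    _ = 128 * j.factorial * (k.factorial * (k+1)^j) * (k+1)^7 * (j+4)^7 := by ring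
    _ ≤ 128 * j.factorial * (k+j).factorial * (k+1)^7 * (j+4)^7 := by
        exact Nat.mul_le_mul (Nat.mul_le_mul (Nat.mul_le_mul le_rfl (fact_add_le k j)) le_rfl) le_rfl

lemma key_nat (k j : ℕ) (hjk : j ≤ k) :
    ((k+j).factorial * (k+j+1)^7 * (k.factorial)^2 * ((j+3).factorial)^2) * (j+1)
      ≤ 128 * (k.factorial * j.factorial * ((k+j).factorial)^2 * (k+1)^7 * (j+4)^7) := by
  have h := key_cancelled k j hjk
  calc ((k+j).factorial * (k+j+1)^7 * (k.factorial)^2 * ((j+3).factorial)^2) * (j+1)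
      = ((k+j).factorial * k.factorial) * (k.factorial * ((j+3).factorial)^2 * (k+j+1)^7 * (j+1)) := by ring
    _ ≤ ((k+j).factorial * k.factorial) * (128 * j.factorial * (k+j).factorial * (k+1)^7 * (j+4)^7) :=
        Nat.mul_le_mul le_rfl h
    _ = 128 * (k.factorial * j.factorial * ((k+j).factorial)^2 * (k+1)^7 * (j+4)^7) := by ring

/-- High-frequency combinatorial weight inequality: there is a constant `C > 0` such that
for `0 < ρ ≤ 1`, `m ≥ 0` and `⌊m/2⌋ + 1 ≤ k ≤ m`,
`(m!/(k!(m-k)!)) L_{ρ,m}/(L_{ρ,k} L_{ρ,m-k+3}) ≤ (C/ρ⁴) (1/(m-k+1))`. -/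
theorem weight_ineq_high : ∃ C : ℝ, 0 < C ∧
    ∀ ρ : ℝ, 0 < ρ → ρ ≤ 1 → ∀ m k : ℕ, m / 2 + 1 ≤ k → k ≤ m →
      (Nat.factorial m : ℝ) / ((Nat.factorial k : ℝ) * (Nat.factorial (m - k) : ℝ)) *
          (Lw ρ m / (Lw ρ k * Lw ρ (m - k + 3))) ≤
        C / ρ ^ 4 * (1 / ((m - k : ℕ) + 1 : ℝ)) := by
  refine ⟨128, by norm_num, ?_⟩
  intro ρ hρ hρ1 m k hk1 hk2
  obtain ⟨j, rfl⟩ : ∃ j, m = k + j := ⟨m - k, by omega⟩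
  have hjk : j ≤ k := by omega
  simp only [Nat.add_sub_cancel_left]
  have hρ0 : ρ ≠ 0 := ne_of_gt hρ
  have hfk : (0:ℝ) < (k.factorial : ℝ) := by exact_mod_cast k.factorial_pos
  have hfj : (0:ℝ) < (j.factorial : ℝ) := by exact_mod_cast j.factorial_pos
  have hfkj : (0:ℝ) < ((k+j).factorial : ℝ) := by exact_mod_cast (k+j).factorial_pos
  have hfj3 : (0:ℝ) < ((j+3).factorial : ℝ) := by exact_mod_cast (j+3).factorial_pos
  set Nr : ℝ := ((k+j).factorial : ℝ) * ((k:ℝ)+(j:ℝ)+1)^7 * ((k.factorial:ℝ))^2 * (((j+3).factorial:ℝ))^2 with hNr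
  set Dr : ℝ := (k.factorial:ℝ) * (j.factorial:ℝ) * (((k+j).factorial:ℝ))^2 * ((k:ℝ)+1)^7 * ((j:ℝ)+4)^7 with hDr
  have hDrpos : 0 < Dr := by rw [hDr]; positivity
  have hL : ((k+j).factorial : ℝ) / ((Nat.factorial k : ℝ) * (Nat.factorial j : ℝ)) *
      (Lw ρ (k+j) / (Lw ρ k * Lw ρ (j + 3))) = Nr / (Dr * ρ^4) := by
    simp only [Lw, hNr, hDr]
    push_cast
    field_simp
    ring
  rw [hL]
  have hR : (128:ℝ) / ρ ^ 4 * (1 / ((j:ℝ) + 1)) = 128 / (((j:ℝ)+1) * ρ^4) := by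
    rw [div_mul_div_comm, mul_one, mul_comm (ρ^4)]
  rw [hR, div_le_div_iff₀ (by positivity) (by positivity)]
  have hkey : Nr * ((j:ℝ)+1) ≤ 128 * Dr := by
    rw [hNr, hDr]
    exact_mod_cast key_nat k j hjk
  calc Nr * (((j:ℝ)+1) * ρ^4) = (Nr * ((j:ℝ)+1)) * ρ^4 := by ring
    _ ≤ (128 * Dr) * ρ^4 := mul_le_mul_of_nonneg_right hkey (by positivity)
    _ = 128 * (Dr * ρ^4) := by ring
end

section
/- Define L_{ρ,m} = ρ^{m+1}(m+1)^7/(m!)². For all integers m ≥ 0, all 0 ≤ k ≤ m, and all 0 < ρ ≤ 1: (m!/(k!(m-k)!)) · L_{ρ/2,m}/(L_{ρ,k+3} · L_{ρ/2,m-k}) ≤ 2^{7-k}(k+3)⁶ ρ^{-4}. -/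
/-- Weight comparison between radii `ρ/2` and `ρ`: for all `m ≥ 0`, `0 ≤ k ≤ m` and
`0 < ρ ≤ 1`, `(m!/(k!(m-k)!)) L_{ρ/2,m}/(L_{ρ,k+3} L_{ρ/2,m-k}) ≤ 2^{7-k}(k+3)⁶ ρ⁻⁴`. -/
theorem weight_compare (ρ : ℝ) (hρ : 0 < ρ) (hρ1 : ρ ≤ 1) (m k : ℕ) (hk : k ≤ m) :
    (Nat.factorial m : ℝ) / ((Nat.factorial k : ℝ) * (Nat.factorial (m - k) : ℝ)) *
        (Lw (ρ / 2) m / (Lw ρ (k + 3) * Lw (ρ / 2) (m - k))) ≤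
      (2 : ℝ) ^ ((7 : ℝ) - (k : ℝ)) * ((k : ℝ) + 3) ^ 6 * ρ ^ (-4 : ℤ) := by
  obtain ⟨j, rfl⟩ : ∃ j, m = k + j := ⟨m - k, by omega⟩
  rw [Nat.add_sub_cancel_left]
  have hρ0 : ρ ≠ 0 := hρ.ne'
  have hfk : (0:ℝ) < (Nat.factorial k : ℝ) := Nat.cast_pos.mpr k.factorial_pos
  have hfj : (0:ℝ) < (Nat.factorial j : ℝ) := Nat.cast_pos.mpr j.factorial_pos
  have hfkj : (0:ℝ) < (Nat.factorial (k+j) : ℝ) := Nat.cast_pos.mpr (k+j).factorial_pos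
  have hfk3 : (0:ℝ) < (Nat.factorial (k+3) : ℝ) := Nat.cast_pos.mpr (k+3).factorial_pos
  have hEq : (Nat.factorial (k+j) : ℝ) / ((Nat.factorial k : ℝ) * (Nat.factorial j : ℝ)) *
      (Lw (ρ / 2) (k+j) / (Lw ρ (k + 3) * Lw (ρ / 2) j)) =
      ρ⁻¹ ^ 4 * (1/2 : ℝ)^k *
        (((k:ℝ)+(j:ℝ)+1)^7 / (((k:ℝ)+4)^7 * ((j:ℝ)+1)^7)) *
        (((Nat.factorial (k+3):ℝ))^2 * (Nat.factorial j : ℝ) /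
          ((Nat.factorial k : ℝ) * (Nat.factorial (k+j) : ℝ))) := by
    simp only [Lw]
    push_cast
    have h1 : ((k:ℝ)+(j:ℝ)+1) ≠ 0 := by positivity
    have h2 : ((j:ℝ)+1) ≠ 0 := by positivity
    field_simp
    ring
  rw [hEq]
  -- bound the middle ratio by 1
  have hle1 : (((k:ℝ)+(j:ℝ)+1)^7 / (((k:ℝ)+4)^7 * ((j:ℝ)+1)^7)) ≤ 1 := by
    rw [div_le_one (by positivity)]
    have hb : ((k:ℝ)+(j:ℝ)+1) ≤ ((k:ℝ)+4) * ((j:ℝ)+1) := by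
      have hk0 : (0:ℝ) ≤ (k:ℝ) := Nat.cast_nonneg k
      have hj0 : (0:ℝ) ≤ (j:ℝ) := Nat.cast_nonneg j
      nlinarith
    calc ((k:ℝ)+(j:ℝ)+1)^7 ≤ (((k:ℝ)+4) * ((j:ℝ)+1))^7 :=
          pow_le_pow_left₀ (by positivity) hb 7
      _ = ((k:ℝ)+4)^7 * ((j:ℝ)+1)^7 := mul_pow _ _ _
  -- factorial identity
  have hfac3 : (Nat.factorial (k+3) : ℝ) =
      ((k:ℝ)+1)*((k:ℝ)+2)*((k:ℝ)+3) * (Nat.factorial k : ℝ) := by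
    have : Nat.factorial (k+3) = (k+3) * ((k+2) * ((k+1) * Nat.factorial k)) := rfl
    rw [this]; push_cast; ring
  have hdvd : (Nat.factorial k : ℝ) * (Nat.factorial j : ℝ) ≤ (Nat.factorial (k+j) : ℝ) := by
    have := Nat.le_of_dvd (k+j).factorial_pos (Nat.factorial_mul_factorial_dvd_factorial_add k j)
    exact_mod_cast this
  have hle2 : ((Nat.factorial (k+3):ℝ))^2 * (Nat.factorial j : ℝ) /
      ((Nat.factorial k : ℝ) * (Nat.factorial (k+j) : ℝ)) ≤ ((k:ℝ)+3)^6 := by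
    rw [hfac3, div_le_iff₀ (by positivity)]
    have hk0 : (0:ℝ) ≤ (k:ℝ) := Nat.cast_nonneg k
    have hP : (((k:ℝ)+1)*((k:ℝ)+2)*((k:ℝ)+3))^2 ≤ ((k:ℝ)+3)^6 := by
      have h3 : ((k:ℝ)+1)*((k:ℝ)+2)*((k:ℝ)+3) ≤ ((k:ℝ)+3)^3 := by nlinarith
      calc (((k:ℝ)+1)*((k:ℝ)+2)*((k:ℝ)+3))^2 ≤ (((k:ℝ)+3)^3)^2 :=
            pow_le_pow_left₀ (by positivity) h3 2
        _ = ((k:ℝ)+3)^6 := by ring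
    calc (((k:ℝ)+1)*((k:ℝ)+2)*((k:ℝ)+3) * (Nat.factorial k : ℝ))^2 * (Nat.factorial j : ℝ)
        = (((k:ℝ)+1)*((k:ℝ)+2)*((k:ℝ)+3))^2 * (Nat.factorial k : ℝ) *
            ((Nat.factorial k : ℝ) * (Nat.factorial j : ℝ)) := by ring
      _ ≤ (((k:ℝ)+1)*((k:ℝ)+2)*((k:ℝ)+3))^2 * (Nat.factorial k : ℝ) *
            (Nat.factorial (k+j) : ℝ) := by
          apply mul_le_mul_of_nonneg_left hdvd (by positivity)
      _ ≤ ((k:ℝ)+3)^6 * (Nat.factorial k : ℝ) * (Nat.factorial (k+j) : ℝ) := by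
          apply mul_le_mul_of_nonneg_right _ hfkj.le
          exact mul_le_mul_of_nonneg_right hP hfk.le
      _ = ((k:ℝ)+3)^6 * ((Nat.factorial k : ℝ) * (Nat.factorial (k+j) : ℝ)) := by ring
  -- combine
  have hstep : ρ⁻¹ ^ 4 * (1/2 : ℝ)^k *
      (((k:ℝ)+(j:ℝ)+1)^7 / (((k:ℝ)+4)^7 * ((j:ℝ)+1)^7)) *
      (((Nat.factorial (k+3):ℝ))^2 * (Nat.factorial j : ℝ) /
        ((Nat.factorial k : ℝ) * (Nat.factorial (k+j) : ℝ))) ≤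
      ρ⁻¹ ^ 4 * (1/2 : ℝ)^k * 1 * ((k:ℝ)+3)^6 := by
    have h0 : (0:ℝ) ≤ ρ⁻¹ ^ 4 * (1/2:ℝ)^k := by positivity
    apply mul_le_mul
    · exact mul_le_mul_of_nonneg_left hle1 h0
    · exact hle2
    · positivity
    · positivity
  refine hstep.trans ?_
  have hz : ρ ^ (-4:ℤ) = (ρ⁻¹)^4 := by
    rw [show (-4:ℤ) = -((4:ℕ):ℤ) by norm_num, zpow_neg, zpow_natCast, inv_pow]
  have hr : (2:ℝ) ^ ((7:ℝ) - (k:ℝ)) = 128 * (1/2:ℝ)^k := by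
    rw [Real.rpow_sub (by norm_num), Real.rpow_natCast]
    rw [div_pow, one_pow, div_eq_mul_inv]
    norm_num
  rw [hz, hr]
  have hX : (0:ℝ) ≤ (1/2:ℝ)^k * ((k:ℝ)+3)^6 * ρ⁻¹^4 := by positivity
  nlinarith [hX]
end

section
/- Define L_{ρ,m} = ρ^{m+1}(m+1)^7/(m!)². For all integers m ≥ 0, all k with ⌊m/2⌋+1 ≤ k ≤ m, and all 0 < ρ ≤ 1: (m!/(k!(m-k)!)) · L_{ρ/2,m}/(L_{ρ,k+2} · L_{ρ/2,m-k+1}) ≤ 2^{7-k}(k+2)⁶ ρ^{-4}. -/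
lemma weight_key_aux (K N : ℝ) (hK : 0 ≤ K) (hN : 0 ≤ N) (hNK : N + 1 ≤ K) :
    (K+2)^2 * (K+1)^2 * (N+1)^2 * (K+N+1)^7 ≤ 64 * (K+2)^6 * ((K+3)^7 * (N+2)^7) := by
  have hKN : K + N + 1 ≤ 2 * (K + 3) := by nlinarith
  calc (K+2)^2 * (K+1)^2 * (N+1)^2 * (K+N+1)^7
      ≤ (K+2)^2 * (K+1)^2 * (N+2)^2 * (2*(K+3))^7 := by
        gcongr <;> linarith
    _ = 32 * ((K+2)^2 * (4*(K+1)^2) * (N+2)^2 * (K+3)^7) := by ring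
    _ ≤ 32 * ((K+2)^2 * ((K+2)^4) * (N+2)^7 * (K+3)^7) := by
        gcongr
        · nlinarith [sq_nonneg (K*K), mul_nonneg (mul_nonneg hK hK) hK, sq_nonneg K]
        · linarith
        · norm_num
    _ = 32 * ((K+2)^6 * ((K+3)^7 * (N+2)^7)) := by ring
    _ ≤ 64 * (K+2)^6 * ((K+3)^7 * (N+2)^7) := by
        have hX : (0:ℝ) ≤ (K+2)^6 * ((K+3)^7 * (N+2)^7) := by positivity
        nlinarith

/-- High-frequency weight comparison between radii `ρ/2` and `ρ`: for `m ≥ 0`,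
`⌊m/2⌋+1 ≤ k ≤ m` and `0 < ρ ≤ 1`,
`(m!/(k!(m-k)!)) L_{ρ/2,m}/(L_{ρ,k+2} L_{ρ/2,m-k+1}) ≤ 2^{7-k}(k+2)⁶ ρ⁻⁴`. -/
theorem weight_compare_high (ρ : ℝ) (hρ : 0 < ρ) (hρ1 : ρ ≤ 1) (m k : ℕ)
    (hk1 : m / 2 + 1 ≤ k) (hk2 : k ≤ m) :
    (Nat.factorial m : ℝ) / ((Nat.factorial k : ℝ) * (Nat.factorial (m - k) : ℝ)) *
        (Lw (ρ / 2) m / (Lw ρ (k + 2) * Lw (ρ / 2) (m - k + 1))) ≤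
      (2 : ℝ) ^ ((7 : ℝ) - (k : ℝ)) * ((k : ℝ) + 2) ^ 6 * ρ ^ (-4 : ℤ) := by
  obtain ⟨n, rfl⟩ : ∃ n, m = k + n := ⟨m - k, (Nat.add_sub_cancel' hk2).symm⟩
  have hnk : n + 1 ≤ k := by omega
  simp only [Nat.add_sub_cancel_left, Lw]
  have hrpow : (2 : ℝ) ^ ((7 : ℝ) - (k : ℝ)) = 128 * ((2:ℝ) ^ k)⁻¹ := by
    rw [Real.rpow_sub two_pos, Real.rpow_natCast, div_eq_mul_inv]
    norm_num
  have hzpow : ρ ^ (-4 : ℤ) = (ρ ^ 4)⁻¹ := by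
    rw [show (-4:ℤ) = -(4:ℕ) by norm_num, zpow_neg, zpow_natCast]
  rw [hrpow, hzpow]
  have hfk : (0:ℝ) < (Nat.factorial k : ℝ) := by positivity
  have hfn : (0:ℝ) < (Nat.factorial n : ℝ) := by positivity
  have hfm : (0:ℝ) < (Nat.factorial (k+n) : ℝ) := by positivity
  have hfle : (Nat.factorial k : ℝ) * (Nat.factorial n : ℝ) ≤ (Nat.factorial (k+n) : ℝ) := by
    exact_mod_cast Nat.le_of_dvd (Nat.factorial_pos _) (Nat.factorial_mul_factorial_dvd_factorial_add k n)
  set K : ℝ := (k : ℝ)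
  set N : ℝ := (n : ℝ)
  have hK : (0:ℝ) ≤ K := Nat.cast_nonneg k
  have hN : (0:ℝ) ≤ N := Nat.cast_nonneg n
  have e1 : (Nat.factorial (k+n) : ℝ) / ((Nat.factorial k : ℝ) * (Nat.factorial n : ℝ)) *
      ((ρ/2) ^ (k+n + 1) * (((k+n:ℕ) : ℝ) + 1) ^ 7 / ((Nat.factorial (k+n) : ℝ)) ^ 2 /
        ((ρ ^ (k + 2 + 1) * (((k+2:ℕ) : ℝ) + 1) ^ 7 / ((Nat.factorial (k+2) : ℝ)) ^ 2) *
          ((ρ/2) ^ (n + 1 + 1) * (((n+1:ℕ) : ℝ) + 1) ^ 7 / ((Nat.factorial (n+1) : ℝ)) ^ 2))) =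
      2 * ((2:ℝ)^k)⁻¹ * (ρ^4)⁻¹ *
        ((K+2)^2 * (K+1)^2 * (N+1)^2 * (K+N+1)^7 * ((Nat.factorial k : ℝ) * (Nat.factorial n : ℝ)) /
          ((Nat.factorial (k+n) : ℝ) * ((K+3)^7 * (N+2)^7))) := by
    rw [Nat.factorial_succ (k+1), Nat.factorial_succ k, Nat.factorial_succ n]
    push_cast
    field_simp
    simp only [K, N, div_pow]
    field_simp
    ring
  rw [e1]
  have key : (K+2)^2 * (K+1)^2 * (N+1)^2 * (K+N+1)^7 ≤ 64 * (K+2)^6 * ((K+3)^7 * (N+2)^7) :=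
    weight_key_aux K N hK hN (by show (n:ℝ) + 1 ≤ (k:ℝ); exact_mod_cast hnk)
  have hC : (K+2)^2 * (K+1)^2 * (N+1)^2 * (K+N+1)^7 * ((Nat.factorial k : ℝ) * (Nat.factorial n : ℝ)) /
      ((Nat.factorial (k+n) : ℝ) * ((K+3)^7 * (N+2)^7)) ≤ 64 * (K+2)^6 := by
    rw [div_le_iff₀ (by positivity)]
    calc (K+2)^2 * (K+1)^2 * (N+1)^2 * (K+N+1)^7 * ((Nat.factorial k : ℝ) * (Nat.factorial n : ℝ))
        ≤ (64 * (K+2)^6 * ((K+3)^7 * (N+2)^7)) * (Nat.factorial (k+n) : ℝ) := by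
          apply mul_le_mul key hfle (by positivity) (by positivity)
      _ = 64 * (K+2)^6 * ((Nat.factorial (k+n) : ℝ) * ((K+3)^7 * (N+2)^7)) := by ring
  calc 2 * ((2:ℝ)^k)⁻¹ * (ρ^4)⁻¹ *
        ((K+2)^2 * (K+1)^2 * (N+1)^2 * (K+N+1)^7 * ((Nat.factorial k : ℝ) * (Nat.factorial n : ℝ)) /
          ((Nat.factorial (k+n) : ℝ) * ((K+3)^7 * (N+2)^7)))
      ≤ 2 * ((2:ℝ)^k)⁻¹ * (ρ^4)⁻¹ * (64 * (K+2)^6) := by gcongr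
    _ = 128 * ((2:ℝ)^k)⁻¹ * (K+2)^6 * (ρ^4)⁻¹ := by ring
end
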